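/- arXiv:2107.10334 — 2 statements merged into one kernel-verified Lean document; each statement's English description precedes it below -/
import Mathlib

section
/- Define D_0 = 1 and D_n = (3n-2)/n · binom(2n-2, n-1) for n ≥ 1, and define D̃_n = 9(n-2)·binom(2(n-2), n-2) for n ≥ 3. Let C_i be the i-th Catalan number. Then for every n ≥ 3, D̃_{n+1} = 2·∑_{i=0}^{n-3} C_i · D̃_{n-i} + 2·∑_{j=0}^{n} D_j · D_{n-j}. -/
/-- `D n` : the number of clusters of the finite type `Dₙ` cluster algebra,
with `D 0 = 1` and `D n = (3n-2)/n · binom(2n-2, n-1)` for `n ≥ 1`. -/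
noncomputable def finiteDCount (n : ℕ) : ℚ :=
  if n = 0 then 1 else ((3 * (n : ℚ) - 2) / n) * Nat.centralBinom (n - 1)

/-- `D̃ n = 9(n-2)·binom(2(n-2), n-2)` : the number of clusters of the affine
`Dₙ` cluster algebra up to the Dehn twist `γ` (for `n ≥ 3`). -/
def affineDCount (n : ℕ) : ℚ :=
  9 * ((n : ℚ) - 2) * Nat.centralBinom (n - 2)

open Finset

private lemma hb (k : ℕ) :
    ((k : ℚ) + 1) * Nat.centralBinom (k + 1) = 2 * (2 * k + 1) * Nat.centralBinom k := by
  have h := Nat.succ_mul_centralBinom_succ k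
  have h2 : (((k + 1) * Nat.centralBinom (k + 1) : ℕ) : ℚ)
      = ((2 * (2 * k + 1) * Nat.centralBinom k : ℕ) : ℚ) := by exact_mod_cast h
  push_cast at h2
  linarith

private lemma hbc (k : ℕ) :
    (Nat.centralBinom k : ℚ) = ((k : ℚ) + 1) * catalan k := by
  have h := succ_mul_catalan_eq_centralBinom k
  have h2 : (((k + 1) * catalan k : ℕ) : ℚ) = ((Nat.centralBinom k : ℕ) : ℚ) := by
    exact_mod_cast h
  push_cast at h2
  linarith

private lemma hcat (m : ℕ) :
    (catalan (m + 1) : ℚ) = ∑ k ∈ range (m + 1), (catalan k : ℚ) * catalan (m - k) := by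
  rw [catalan_succ' m]
  rw [Nat.sum_antidiagonal_eq_sum_range_succ (fun x y => catalan x * catalan y) m]
  push_cast
  rfl

/-- symmetry trick: twice the weighted convolution equals m times the convolution. -/
private lemma sym (f g : ℕ → ℚ) (m : ℕ)
    (hfg : ∀ i ≤ m, f i * g (m - i) = f (m - i) * g i) :
    2 * ∑ k ∈ range (m + 1), (k : ℚ) * (f k * g (m - k)) =
      (m : ℚ) * ∑ k ∈ range (m + 1), f k * g (m - k) := by
  have h := Finset.sum_range_reflect (fun k => (k : ℚ) * (f k * g (m - k))) (m + 1)
  have h2 : ∑ k ∈ range (m + 1), ((m - k : ℕ) : ℚ) * (f k * g (m - k)) =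
      ∑ k ∈ range (m + 1), (k : ℚ) * (f k * g (m - k)) := by
    rw [← h]
    refine Finset.sum_congr rfl fun k hk => ?_
    have hk' : k ≤ m := Nat.lt_succ_iff.mp (Finset.mem_range.mp hk)
    have e1 : m + 1 - 1 - k = m - k := by omega
    have e2 : m - (m - k) = k := by omega
    rw [e1, e2, hfg k hk']
  calc 2 * ∑ k ∈ range (m + 1), (k : ℚ) * (f k * g (m - k))
      = ∑ k ∈ range (m + 1), (k : ℚ) * (f k * g (m - k))
        + ∑ k ∈ range (m + 1), ((m - k : ℕ) : ℚ) * (f k * g (m - k)) := by rw [h2]; ring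
    _ = ∑ k ∈ range (m + 1), ((k : ℚ) + ((m - k : ℕ) : ℚ)) * (f k * g (m - k)) := by
        rw [← Finset.sum_add_distrib]; refine Finset.sum_congr rfl fun k hk => ?_; ring
    _ = (m : ℚ) * ∑ k ∈ range (m + 1), f k * g (m - k) := by
        rw [Finset.mul_sum]
        refine Finset.sum_congr rfl fun k hk => ?_
        have hk' : k ≤ m := Nat.lt_succ_iff.mp (Finset.mem_range.mp hk)
        have : ((m - k : ℕ) : ℚ) = (m : ℚ) - k := by
          rw [Nat.cast_sub hk']
        rw [this]; ring

/-- weighted Catalan self-convolution. -/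
private lemma Wcat (m : ℕ) :
    2 * ∑ k ∈ range (m + 1), (k : ℚ) * ((catalan k : ℚ) * catalan (m - k)) =
      (m : ℚ) * catalan (m + 1) := by
  rw [sym (fun k => (catalan k : ℚ)) (fun k => (catalan k : ℚ)) m
    (fun i _ => mul_comm _ _), ← hcat]

/-- T : Catalan–centralBinom convolution. -/
private lemma Tsum (m : ℕ) :
    ∑ k ∈ range (m + 1), (catalan k : ℚ) * Nat.centralBinom (m - k) =
      (Nat.centralBinom (m + 1) : ℚ) / 2 := by
  have key : ∑ k ∈ range (m + 1), (catalan k : ℚ) * Nat.centralBinom (m - k)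
      = ∑ k ∈ range (m + 1), (((m - k : ℕ) : ℚ) * ((catalan k : ℚ) * catalan (m - k))
          + (catalan k : ℚ) * catalan (m - k)) := by
    refine Finset.sum_congr rfl fun k hk => ?_
    rw [hbc (m - k)]; ring
  rw [key, Finset.sum_add_distrib, ← hcat]
  have h2 : ∑ k ∈ range (m + 1), ((m - k : ℕ) : ℚ) * ((catalan k : ℚ) * catalan (m - k))
      = ∑ k ∈ range (m + 1), (k : ℚ) * ((catalan k : ℚ) * catalan (m - k)) := by
    have h := Finset.sum_range_reflect
      (fun k => (k : ℚ) * ((catalan k : ℚ) * catalan (m - k))) (m + 1)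
    rw [← h]
    refine Finset.sum_congr rfl fun k hk => ?_
    have hk' : k ≤ m := Nat.lt_succ_iff.mp (Finset.mem_range.mp hk)
    have e1 : m + 1 - 1 - k = m - k := by omega
    have e2 : m - (m - k) = k := by omega
    rw [e1, e2]; ring
  rw [h2]
  have := Wcat m
  have hb1 := hbc (m + 1)
  push_cast at hb1 ⊢
  linarith

/-- B : centralBinom self-convolution equals 4^m. -/
private lemma Bsum (m : ℕ) :
    ∑ k ∈ range (m + 1), (Nat.centralBinom k : ℚ) * Nat.centralBinom (m - k) = 4 ^ m := by
  induction m with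
  | zero => simp [Nat.centralBinom]
  | succ m ih =>
    set bb : ℕ → ℚ := fun k => (Nat.centralBinom k : ℚ) with hbb
    have hsym := sym bb bb (m + 1) (fun i _ => mul_comm _ _)
    have hpeel : ∑ k ∈ range (m + 2), (k : ℚ) * (bb k * bb (m + 1 - k)) =
        (2 * m + 2) * ∑ k ∈ range (m + 1), bb k * bb (m - k) := by
      rw [Finset.sum_range_succ' (fun k => (k : ℚ) * (bb k * bb (m + 1 - k))) (m + 1)]
      simp only [Nat.cast_zero, zero_mul, add_zero]
      have : ∀ k ∈ range (m + 1), ((k + 1 : ℕ) : ℚ) * (bb (k + 1) * bb (m + 1 - (k + 1)))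
          = (4 * k + 2) * (bb k * bb (m - k)) := by
        intro k hk
        have e : m + 1 - (k + 1) = m - k := by omega
        rw [e]
        have := hb k
        simp only [hbb]
        push_cast
        nlinarith [this]
      rw [Finset.sum_congr rfl this]
      have expand : ∑ k ∈ range (m + 1), ((4 * (k : ℚ) + 2) * (bb k * bb (m - k)))
          = 2 * (2 * ∑ k ∈ range (m + 1), (k : ℚ) * (bb k * bb (m - k)))
            + 2 * ∑ k ∈ range (m + 1), bb k * bb (m - k) := by
        rw [Finset.mul_sum, Finset.mul_sum, Finset.mul_sum, ← Finset.sum_add_distrib]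
        refine Finset.sum_congr rfl fun k hk => ?_; ring
      rw [expand, sym bb bb m (fun i _ => mul_comm _ _)]
      ring
    rw [hpeel, ih] at hsym
    push_cast at hsym
    have hm1 : ((m : ℚ) + 1) ≠ 0 := by positivity
    have h5 : ((m : ℚ) + 1) * (∑ k ∈ range (m + 1 + 1), bb k * bb (m + 1 - k)) =
        ((m : ℚ) + 1) * 4 ^ (m + 1) := by
      linear_combination -hsym
    have h4 := mul_left_cancel₀ hm1 h5
    simpa [hbb] using h4

/-- G : ∑ k(m-k) C_k C_{m-k} = 4^m - (m+1) C_{m+1}. -/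
private lemma Gsum (m : ℕ) :
    ∑ k ∈ range (m + 1), ((k : ℚ) * ((m - k : ℕ) : ℚ)) * ((catalan k : ℚ) * catalan (m - k)) =
      4 ^ m - ((m : ℚ) + 1) * catalan (m + 1) := by
  have key : ∀ k ∈ range (m + 1),
      ((k : ℚ) * ((m - k : ℕ) : ℚ)) * ((catalan k : ℚ) * catalan (m - k)) =
        (Nat.centralBinom k : ℚ) * Nat.centralBinom (m - k)
          - (catalan k : ℚ) * Nat.centralBinom (m - k)
          - (catalan (m - k) : ℚ) * Nat.centralBinom k
          + (catalan k : ℚ) * catalan (m - k) := by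
    intro k hk
    have h1 := hbc k
    have h2 := hbc (m - k)
    nlinarith [h1, h2]
  rw [Finset.sum_congr rfl key]
  have refl2 : ∑ k ∈ range (m + 1), (catalan (m - k) : ℚ) * Nat.centralBinom k
      = ∑ k ∈ range (m + 1), (catalan k : ℚ) * Nat.centralBinom (m - k) := by
    have h := Finset.sum_range_reflect
      (fun k => (catalan k : ℚ) * Nat.centralBinom (m - k)) (m + 1)
    rw [← h]
    refine Finset.sum_congr rfl fun k hk => ?_
    have hk' : k ≤ m := Nat.lt_succ_iff.mp (Finset.mem_range.mp hk)
    have e1 : m + 1 - 1 - k = m - k := by omega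
    have e2 : m - (m - k) = k := by omega
    rw [e1, e2]
  simp only [Finset.sum_add_distrib, Finset.sum_sub_distrib]
  rw [refl2, Tsum, Bsum, ← hcat]
  have h3 := hbc (m + 1)
  push_cast at h3 ⊢
  linarith

/-- A : weighted Catalan–centralBinom convolution. -/
private lemma Asum (m : ℕ) :
    ∑ i ∈ range m, (catalan i : ℚ) * (((m - i : ℕ) : ℚ) * Nat.centralBinom (m - i)) =
      (2 * (m : ℚ) + 1) * Nat.centralBinom m - 4 ^ m := by
  induction m with
  | zero => simp [Nat.centralBinom]
  | succ m ih =>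
    have step : ∀ i ∈ range (m + 1),
        (catalan i : ℚ) * (((m + 1 - i : ℕ) : ℚ) * Nat.centralBinom (m + 1 - i)) =
          4 * ((catalan i : ℚ) * (((m - i : ℕ) : ℚ) * Nat.centralBinom (m - i)))
            + 2 * ((catalan i : ℚ) * Nat.centralBinom (m - i)) := by
      intro i hi
      have hi' : i ≤ m := Nat.lt_succ_iff.mp (Finset.mem_range.mp hi)
      have e1 : m + 1 - i = (m - i) + 1 := by omega
      rw [e1]
      have h := hb (m - i)
      push_cast
      nlinarith [h]
    rw [Finset.sum_congr rfl step, Finset.sum_add_distrib, ← Finset.mul_sum, ← Finset.mul_sum]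
    have peel : ∑ i ∈ range (m + 1),
        (catalan i : ℚ) * (((m - i : ℕ) : ℚ) * Nat.centralBinom (m - i)) =
        ∑ i ∈ range m, (catalan i : ℚ) * (((m - i : ℕ) : ℚ) * Nat.centralBinom (m - i)) := by
      rw [Finset.sum_range_succ]
      simp
    rw [peel, ih, Tsum]
    have h := hb m
    have hp : (4 : ℚ) ^ (m + 1) = 4 ^ m * 4 := pow_succ 4 m
    push_cast at h ⊢
    linarith

/-- D_{k+1} = (3k+1) C_k. -/
private lemma Dsucc (k : ℕ) :
    finiteDCount (k + 1) = (3 * (k : ℚ) + 1) * catalan k := by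
  unfold finiteDCount
  simp only [Nat.add_sub_cancel, if_neg (Nat.succ_ne_zero k)]
  rw [hbc k]
  have hk : ((k : ℚ) + 1) ≠ 0 := by positivity
  push_cast
  field_simp
  ring

private lemma D0 : finiteDCount 0 = 1 := by simp [finiteDCount]

/-- P : the finite-type convolution. -/
private lemma Psum (m : ℕ) :
    ∑ j ∈ range (m + 3), finiteDCount j * finiteDCount (m + 2 - j) = 9 * 4 ^ m := by
  rw [Finset.sum_range_succ, Finset.sum_range_succ'
    (fun j => finiteDCount j * finiteDCount (m + 2 - j)) (m + 1)]
  have e0 : m + 2 - 0 = m + 2 := rfl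
  have e1 : m + 2 - (m + 2) = 0 := by omega
  rw [e0, e1, D0]
  have mid : ∀ j ∈ range (m + 1),
      finiteDCount (j + 1) * finiteDCount (m + 2 - (j + 1)) =
        9 * (((j : ℚ) * ((m - j : ℕ) : ℚ)) * ((catalan j : ℚ) * catalan (m - j)))
          + (3 * (m : ℚ) + 1) * ((catalan j : ℚ) * catalan (m - j)) := by
    intro j hj
    have hj' : j ≤ m := Nat.lt_succ_iff.mp (Finset.mem_range.mp hj)
    have e2 : m + 2 - (j + 1) = (m - j) + 1 := by omega
    rw [e2, Dsucc, Dsucc]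
    have hc : ((m - j : ℕ) : ℚ) = (m : ℚ) - j := Nat.cast_sub hj'
    rw [hc]
    ring
  rw [Finset.sum_congr rfl mid, Finset.sum_add_distrib, ← Finset.mul_sum, ← Finset.mul_sum,
    Gsum, ← hcat]
  rw [Dsucc (m + 1)]
  push_cast
  ring

/-- The recurrence `D̃_{n+1} = 2·∑_{i=0}^{n-3} Cᵢ·D̃_{n-i} + 2·∑_{j=0}^{n} Dⱼ·D_{n-j}`. -/
theorem stmt_11 (n : ℕ) (hn : 3 ≤ n) :
    affineDCount (n + 1) =
      2 * ∑ i ∈ Finset.range (n - 2), (catalan i : ℚ) * affineDCount (n - i) +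
        2 * ∑ j ∈ Finset.range (n + 1), finiteDCount j * finiteDCount (n - j) := by
  obtain ⟨k, rfl⟩ : ∃ k, n = k + 3 := ⟨n - 3, by omega⟩
  have e1 : k + 3 - 2 = k + 1 := by omega
  have e2 : k + 3 + 1 = (k + 1) + 3 := by omega
  have hs1 : ∑ i ∈ Finset.range (k + 3 - 2), (catalan i : ℚ) * affineDCount (k + 3 - i) =
      ∑ i ∈ Finset.range (k + 1),
        (catalan i : ℚ) * (9 * ((((k + 1) - i : ℕ) : ℚ) * Nat.centralBinom ((k + 1) - i))) := by
    rw [e1]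
    refine Finset.sum_congr rfl fun i hi => ?_
    have hi' : i ≤ k := Nat.lt_succ_iff.mp (Finset.mem_range.mp hi)
    unfold affineDCount
    have e3 : k + 3 - i - 2 = (k + 1) - i := by omega
    have e4 : ((k + 3 - i : ℕ) : ℚ) = (((k + 1) - i : ℕ) : ℚ) + 2 := by
      have : k + 3 - i = ((k + 1) - i) + 2 := by omega
      rw [this]; push_cast; ring
    rw [e3, e4]
    ring
  have hs2 : ∑ j ∈ Finset.range (k + 3 + 1), finiteDCount j * finiteDCount (k + 3 - j) =
      9 * 4 ^ (k + 1) := by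
    have := Psum (k + 1)
    convert this using 2
  rw [hs2, hs1]
  have hA : ∑ i ∈ Finset.range (k + 1),
      (catalan i : ℚ) * (9 * ((((k + 1) - i : ℕ) : ℚ) * Nat.centralBinom ((k + 1) - i))) =
      9 * ((2 * ((k : ℚ) + 1) + 1) * Nat.centralBinom (k + 1) - 4 ^ (k + 1)) := by
    have h := Asum (k + 1)
    calc ∑ i ∈ Finset.range (k + 1),
          (catalan i : ℚ) * (9 * ((((k + 1) - i : ℕ) : ℚ) * Nat.centralBinom ((k + 1) - i)))
        = 9 * ∑ i ∈ Finset.range (k + 1),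
            (catalan i : ℚ) * ((((k + 1) - i : ℕ) : ℚ) * Nat.centralBinom ((k + 1) - i)) := by
          rw [Finset.mul_sum]; exact Finset.sum_congr rfl fun i _ => by ring
      _ = 9 * ((2 * ((k : ℚ) + 1) + 1) * Nat.centralBinom (k + 1) - 4 ^ (k + 1)) := by
          rw [h]; push_cast; ring
  rw [hA]
  unfold affineDCount
  have e5 : k + 3 + 1 - 2 = k + 2 := by omega
  rw [e5]
  have h1 := hb (k + 1)
  push_cast at h1 ⊢
  nlinarith [h1]
end

section
/- The normal closure in SL(2, ℤ) of the matrix [[1, 4], [0, 1]] equals the principal congruence subgroup Γ(4) = ker(SL(2,ℤ) → SL(2, ℤ/4ℤ)), and Γ(4) is torsion-free. -/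
abbrev SL2 := Matrix.SpecialLinearGroup (Fin 2) ℤ

/-- The unipotent matrix `[[1, 4], [0, 1]]` as an element of `SL(2, ℤ)`. -/
def U4 : Matrix.SpecialLinearGroup (Fin 2) ℤ :=
  ⟨!![1, 4; 0, 1], by simp [Matrix.det_fin_two_of]⟩

/-- The principal congruence subgroup `Γ(4) = ker(SL(2,ℤ) → SL(2, ℤ/4ℤ))`. -/
def Gamma4 : Subgroup (Matrix.SpecialLinearGroup (Fin 2) ℤ) :=
  MonoidHom.ker (Matrix.SpecialLinearGroup.map (n := Fin 2) (Int.castRingHom (ZMod 4)))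

/-- Old Mathlib definition (removed): a monoid is torsion-free if no nontrivial element has
finite order. -/
def Monoid.IsTorsionFree (G : Type*) [Monoid G] : Prop :=
  ∀ g : G, g ≠ 1 → ¬IsOfFinOrder g

def mkSL (a b c d : ℤ) (h : a * d - b * c = 1) : SL2 :=
  ⟨!![a, b; c, d], by simpa [Matrix.det_fin_two_of] using h⟩

lemma mul_entry (g h : SL2) (i j : Fin 2) :
    (g * h) i j = g i 0 * h 0 j + g i 1 * h 1 j := by
  show ((g * h : SL2) : Matrix (Fin 2) (Fin 2) ℤ) i j = _
  rw [Matrix.SpecialLinearGroup.coe_mul, Matrix.mul_apply, Fin.sum_univ_two]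

lemma mkSL_mul (a b c d e f g k : ℤ) (h h') :
    mkSL a b c d h * mkSL e f g k h' =
      mkSL (a*e+b*g) (a*f+b*k) (c*e+d*g) (c*f+d*k)
        (by linear_combination (e*k - f*g) * h + h') := by
  apply Subtype.ext
  show _ * _ = _
  rw [show ((mkSL a b c d h : SL2) : Matrix (Fin 2) (Fin 2) ℤ) = !![a,b;c,d] from rfl,
    show ((mkSL e f g k h' : SL2) : Matrix (Fin 2) (Fin 2) ℤ) = !![e,f;g,k] from rfl,
    Matrix.mul_fin_two]
  rfl

lemma mkSL_eq {a b c d a' b' c' d' : ℤ} {h h'} (ha : a = a') (hb : b = b') (hc : c = c')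
    (hd : d = d') : mkSL a b c d h = mkSL a' b' c' d' h' := by subst ha hb hc hd; rfl

lemma one_eq_mkSL : (1 : SL2) = mkSL 1 0 0 1 (by norm_num) := by
  apply Subtype.ext
  show (1 : Matrix (Fin 2) (Fin 2) ℤ) = _
  rw [show ((mkSL 1 0 0 1 (by norm_num) : SL2) : Matrix (Fin 2) (Fin 2) ℤ) = !![1,0;0,1] from rfl]
  exact Matrix.one_fin_two

def xx : SL2 := mkSL 1 2 0 1 (by norm_num)
def yy : SL2 := mkSL 1 0 2 1 (by norm_num)
def ww : SL2 := mkSL (-1) 0 0 (-1) (by norm_num)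

lemma xx_inv : xx⁻¹ = mkSL 1 (-2) 0 1 (by norm_num) := by
  apply inv_eq_of_mul_eq_one_right
  rw [xx, mkSL_mul]
  rw [one_eq_mkSL]
  exact mkSL_eq (by ring) (by ring) (by ring) (by ring)

lemma yy_inv : yy⁻¹ = mkSL 1 0 (-2) 1 (by norm_num) := by
  apply inv_eq_of_mul_eq_one_right
  rw [yy, mkSL_mul, one_eq_mkSL]
  exact mkSL_eq (by ring) (by ring) (by ring) (by ring)

lemma xx_zpow (m : ℤ) : (xx^m : SL2) = mkSL 1 (2*m) 0 1 (by ring) := by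
  induction m using Int.induction_on with
  | zero => rw [zpow_zero, one_eq_mkSL]; exact mkSL_eq rfl (by ring) rfl rfl
  | succ n ih =>
      rw [zpow_add_one, ih, xx, mkSL_mul]
      exact mkSL_eq (by ring) (by push_cast; ring) (by ring) (by ring)
  | pred n ih =>
      rw [zpow_sub_one, ih, xx_inv, mkSL_mul]
      exact mkSL_eq (by ring) (by push_cast; ring) (by ring) (by ring)

lemma reduce_abs {a c : ℤ} (ha : a ≠ 0) (h : a.natAbs < c.natAbs) :
    ∃ k : ℤ, (k = 1 ∨ k = -1) ∧ (c + 2*k*a).natAbs < c.natAbs := by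
  rcases le_or_gt 0 a with h1 | h1 <;> rcases le_or_gt 0 c with h2 | h2
  · exact ⟨-1, Or.inr rfl, by omega⟩
  · exact ⟨1, Or.inl rfl, by omega⟩
  · exact ⟨1, Or.inl rfl, by omega⟩
  · exact ⟨-1, Or.inr rfl, by omega⟩

@[simp] lemma mkSL_apply (a b c d : ℤ) (h) (i j : Fin 2) :
    (mkSL a b c d h) i j = !![a,b;c,d] i j := rfl

lemma detrel (A : SL2) : A 0 0 * A 1 1 - A 0 1 * A 1 0 = 1 := by
  have := A.property
  rw [Matrix.det_fin_two] at this
  exact this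

def Hgen : Subgroup SL2 := Subgroup.closure {xx, yy, ww}

lemma xx_mem : xx ∈ Hgen := Subgroup.subset_closure (by simp)
lemma yy_mem : yy ∈ Hgen := Subgroup.subset_closure (by simp)
lemma ww_mem : ww ∈ Hgen := Subgroup.subset_closure (by simp)

lemma eq_of_entries (A : SL2) (a b c d : ℤ) (h) (ha : A 0 0 = a) (hb : A 0 1 = b)
    (hc : A 1 0 = c) (hd : A 1 1 = d) : A = mkSL a b c d h := by
  apply Subtype.ext
  show (A : Matrix (Fin 2) (Fin 2) ℤ) = !![a,b;c,d]
  rw [Matrix.eta_fin_two (A : Matrix (Fin 2) (Fin 2) ℤ)]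
  rw [show (A : Matrix (Fin 2) (Fin 2) ℤ) 0 0 = A 0 0 from rfl, ha]
  rw [show (A : Matrix (Fin 2) (Fin 2) ℤ) 0 1 = A 0 1 from rfl, hb]
  rw [show (A : Matrix (Fin 2) (Fin 2) ℤ) 1 0 = A 1 0 from rfl, hc]
  rw [show (A : Matrix (Fin 2) (Fin 2) ℤ) 1 1 = A 1 1 from rfl, hd]

lemma gen2 (n : ℕ) : ∀ (A : SL2), ((A 0 0).natAbs + (A 1 0).natAbs ≤ n) → 2 ∣ A 0 1 →
    2 ∣ A 1 0 → A ∈ Hgen := by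
  induction n using Nat.strong_induction_on with
  | _ n IH =>
  intro A hn hb hc
  have hdet := detrel A
  have ha_odd : ¬ (2 ∣ A 0 0) := by
    rintro ⟨a', ha'⟩
    obtain ⟨b', hb'⟩ := hb
    have h2 : 2 * (a' * A 1 1 - b' * A 1 0) = 1 := by
      rw [ha', hb'] at hdet; linear_combination hdet
    omega
  by_cases hc0 : A 1 0 = 0
  · -- base case : c = 0
    have had : A 0 0 * A 1 1 = 1 := by rw [hc0] at hdet; linarith
    obtain ⟨m, hm⟩ := hb
    rcases Int.eq_one_or_neg_one_of_mul_eq_one' had with ⟨h1, h2⟩ | ⟨h1, h2⟩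
    · have : A = xx ^ m := by
        rw [xx_zpow]
        exact eq_of_entries A 1 (2*m) 0 1 (by ring) h1 (by omega) hc0 h2
      rw [this]; exact zpow_mem xx_mem m
    · have : A = ww * xx ^ (-m) := by
        rw [xx_zpow, ww, mkSL_mul]
        exact eq_of_entries A _ _ _ _ _ h1 (by push_cast; omega) (by push_cast; omega)
          (by push_cast; omega)
      rw [this]; exact mul_mem ww_mem (zpow_mem xx_mem _)
  · -- c ≠ 0
    have hne : (A 0 0).natAbs ≠ (A 1 0).natAbs := by
      intro he
      rcases Int.natAbs_eq_natAbs_iff.mp he with h | h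
      · exact ha_odd (h ▸ hc)
      · exact ha_odd (by rw [h]; exact (dvd_neg.mpr hc))
    have ha0 : A 0 0 ≠ 0 := fun h => ha_odd (by rw [h]; exact dvd_zero 2)
    rcases lt_or_gt_of_ne hne with hlt | hgt
    · -- |a| < |c| : reduce c via yy^k
      obtain ⟨k, hk1, hk2⟩ := reduce_abs ha0 hlt
      have hyk : ∀ B : SL2, (yy^k * B) 0 0 = B 0 0 ∧ (yy^k * B) 0 1 = B 0 1 ∧
          (yy^k * B) 1 0 = B 1 0 + 2*k*(B 0 0) ∧ (yy^k * B) 1 1 = B 1 1 + 2*k*(B 0 1) := by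
        intro B
        rcases hk1 with rfl | rfl
        · rw [zpow_one]
          refine ⟨?_, ?_, ?_, ?_⟩ <;> (rw [mul_entry] ; simp [yy]) <;> ring
        · rw [zpow_neg_one, yy_inv]
          refine ⟨?_, ?_, ?_, ?_⟩ <;> (rw [mul_entry] ; simp) <;> ring
      obtain ⟨e1, e2, e3, e4⟩ := hyk A
      have hmem : yy^k * A ∈ Hgen := by
        apply IH ((A 0 0).natAbs + (A 1 0 + 2*k*(A 0 0)).natAbs) (by omega)
        · rw [e1, e3]
        · rw [e2]; exact hb
        · rw [e3]; rcases hc with ⟨c', hc'⟩; exact ⟨c' + k * A 0 0, by rw [hc']; ring⟩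
      have : A = yy^(-k) * (yy^k * A) := by rw [← mul_assoc, ← zpow_add]; simp
      rw [this]
      exact mul_mem (zpow_mem yy_mem _) hmem
    · -- |c| < |a| : reduce a via xx^k
      obtain ⟨k, hk1, hk2⟩ := reduce_abs hc0 hgt
      have hxk : ∀ B : SL2, (xx^k * B) 0 0 = B 0 0 + 2*k*(B 1 0) ∧
          (xx^k * B) 0 1 = B 0 1 + 2*k*(B 1 1) ∧ (xx^k * B) 1 0 = B 1 0 ∧
          (xx^k * B) 1 1 = B 1 1 := by
        intro B
        rcases hk1 with rfl | rfl
        · rw [zpow_one]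
          refine ⟨?_, ?_, ?_, ?_⟩ <;> (rw [mul_entry] ; simp [xx]) <;> ring
        · rw [zpow_neg_one, xx_inv]
          refine ⟨?_, ?_, ?_, ?_⟩ <;> (rw [mul_entry] ; simp) <;> ring
      obtain ⟨e1, e2, e3, e4⟩ := hxk A
      have hmem : xx^k * A ∈ Hgen := by
        apply IH ((A 0 0 + 2*k*(A 1 0)).natAbs + (A 1 0).natAbs) (by omega)
        · rw [e1, e3]
        · rw [e2]; obtain ⟨b', hb'⟩ := hb
          exact ⟨b' + k * A 1 1, by rw [hb']; ring⟩
        · rw [e3]; exact hc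
      have : A = xx^(-k) * (xx^k * A) := by rw [← mul_assoc, ← zpow_add]; simp
      rw [this]
      exact mul_mem (zpow_mem xx_mem _) hmem


-- ### mem_Gamma4_iff
lemma mem_Gamma4_iff {A : SL2} :
    A ∈ Gamma4 ↔ 4 ∣ A 0 0 - 1 ∧ 4 ∣ A 0 1 ∧ 4 ∣ A 1 0 ∧ 4 ∣ A 1 1 - 1 := by
  have h4 : ∀ x : ℤ, ((x : ZMod 4) = 0) ↔ (4:ℤ) ∣ x := by
    intro x
    simpa using ZMod.intCast_zmod_eq_zero_iff_dvd x 4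
  constructor
  · intro h
    have h1 : ((Matrix.SpecialLinearGroup.map (n := Fin 2) (Int.castRingHom (ZMod 4))) A :
        Matrix (Fin 2) (Fin 2) (ZMod 4)) = 1 := by
      rw [show (Matrix.SpecialLinearGroup.map (n := Fin 2) (Int.castRingHom (ZMod 4))) A = 1 from h]
      rfl
    have he : ∀ i j, ((A i j : ℤ) : ZMod 4) = (1 : Matrix (Fin 2) (Fin 2) (ZMod 4)) i j := by
      intro i j
      rw [← h1]
      simp [Matrix.SpecialLinearGroup.map_apply_coe]
    refine ⟨?_, ?_, ?_, ?_⟩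
    · rw [← h4]; push_cast; rw [he 0 0]; simp
    · rw [← h4, he 0 1]; simp
    · rw [← h4, he 1 0]; simp
    · rw [← h4]; push_cast; rw [he 1 1]; simp
  · rintro ⟨h1, h2, h3, h4'⟩
    show Matrix.SpecialLinearGroup.map _ A = 1
    apply Subtype.ext
    show ((Matrix.SpecialLinearGroup.map (n := Fin 2) (Int.castRingHom (ZMod 4))) A :
        Matrix (Fin 2) (Fin 2) (ZMod 4)) = 1
    ext i j
    fin_cases i <;> fin_cases j <;>
      simp [Matrix.SpecialLinearGroup.map_apply_coe, Matrix.one_apply] <;>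
      [skip; exact (h4 _).2 h2; exact (h4 _).2 h3; skip]
    · have := (h4 _).2 h1; push_cast at this ⊢; linear_combination this
    · have := (h4 _).2 h4'; push_cast at this ⊢; linear_combination this

-- ### the normal closure
def NN : Subgroup SL2 := Subgroup.normalClosure {U4}

lemma U4_mem_NN : U4 ∈ NN := Subgroup.subset_normalClosure rfl

lemma conj_mem' (g m h : SL2) (hm : m ∈ NN) (he : g * m = h * g) : h ∈ NN := by
  have h2 : h = g * m * g⁻¹ := by rw [he]; group
  rw [h2]
  exact Subgroup.Normal.conj_mem (Subgroup.normalClosure_normal) m hm g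

lemma U4_eq : U4 = mkSL 1 4 0 1 (by norm_num) := rfl

lemma U4_inv : U4⁻¹ = mkSL 1 (-4) 0 1 (by norm_num) := by
  apply inv_eq_of_mul_eq_one_right
  rw [U4_eq, mkSL_mul, one_eq_mkSL]
  exact mkSL_eq (by ring) (by ring) (by ring) (by ring)

lemma rel1 : xx * xx = U4 := by
  rw [xx, U4_eq, mkSL_mul]
  exact mkSL_eq (by ring) (by ring) (by ring) (by ring)

def Smat : SL2 := mkSL 0 (-1) 1 0 (by norm_num)

lemma yy2_mem : yy * yy ∈ NN := by
  apply conj_mem' Smat U4⁻¹ _ (inv_mem U4_mem_NN)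
  rw [U4_inv, Smat, yy, mkSL_mul, mkSL_mul, mkSL_mul]
  exact mkSL_eq (by ring) (by ring) (by ring) (by ring)

lemma zz2_mem : (xx * yy⁻¹) * (xx * yy⁻¹) ∈ NN := by
  apply conj_mem' (mkSL 1 0 1 1 (by norm_num)) U4⁻¹ _ (inv_mem U4_mem_NN)
  rw [U4_inv, xx, yy_inv, mkSL_mul, mkSL_mul, mkSL_mul, mkSL_mul]
  exact mkSL_eq (by ring) (by ring) (by ring) (by ring)

lemma ww_comm_xx : ww * xx = xx * ww := by
  rw [ww, xx, mkSL_mul, mkSL_mul]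
  exact mkSL_eq (by ring) (by ring) (by ring) (by ring)

lemma ww_comm_yy : ww * yy = yy * ww := by
  rw [ww, yy, mkSL_mul, mkSL_mul]
  exact mkSL_eq (by ring) (by ring) (by ring) (by ring)

lemma ww_sq : ww * ww = 1 := by
  rw [ww, mkSL_mul, one_eq_mkSL]
  exact mkSL_eq (by ring) (by ring) (by ring) (by ring)

-- ### quotient
instance NN_normal : NN.Normal := Subgroup.normalClosure_normal

abbrev QQ := SL2 ⧸ NN

def pr : SL2 →* QQ := QuotientGroup.mk' NN

def Xq : QQ := pr xx
def Yq : QQ := pr yy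
def Eq' : QQ := pr ww

def fQ (i j k : Bool) : QQ := (cond i Xq 1) * ((cond j Yq 1) * (cond k Eq' 1))

lemma pr_eq_one_iff {g : SL2} : pr g = 1 ↔ g ∈ NN := QuotientGroup.eq_one_iff (N := NN) g

lemma hX2 : Xq * Xq = 1 := by
  rw [Xq, ← map_mul, rel1, pr_eq_one_iff]; exact U4_mem_NN

lemma hY2 : Yq * Yq = 1 := by
  rw [Yq, ← map_mul, pr_eq_one_iff]; exact yy2_mem

lemma hE2 : Eq' * Eq' = 1 := by
  rw [Eq', ← map_mul, ww_sq, map_one]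

lemma hEX : Eq' * Xq = Xq * Eq' := by
  rw [Eq', Xq, ← map_mul, ← map_mul, ww_comm_xx]

lemma hEY : Eq' * Yq = Yq * Eq' := by
  rw [Eq', Yq, ← map_mul, ← map_mul, ww_comm_yy]

lemma hYX : Yq * Xq = Xq * Yq := by
  have hz : (Xq * Yq⁻¹) * (Xq * Yq⁻¹) = 1 := by
    rw [Xq, Yq, ← map_inv, ← map_mul, ← map_mul, pr_eq_one_iff]
    exact zz2_mem
  have hYinv : Yq⁻¹ = Yq := inv_eq_of_mul_eq_one_right hY2
  have hXinv : Xq⁻¹ = Xq := inv_eq_of_mul_eq_one_right hX2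
  rw [hYinv] at hz
  have h1 : (Xq * Yq)⁻¹ = Xq * Yq := inv_eq_of_mul_eq_one_right hz
  calc Yq * Xq = Yq⁻¹ * Xq⁻¹ := by rw [hYinv, hXinv]
    _ = (Xq * Yq)⁻¹ := by rw [mul_inv_rev]
    _ = Xq * Yq := h1

lemma mulfQ (i j k i' j' k' : Bool) :
    fQ i j k * fQ i' j' k' = fQ (xor i i') (xor j j') (xor k k') := by
  have hXX' : ∀ t, Xq * (Xq * t) = t := fun t => by rw [← mul_assoc, hX2, one_mul]
  have hYY' : ∀ t, Yq * (Yq * t) = t := fun t => by rw [← mul_assoc, hY2, one_mul]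
  have hEE' : ∀ t, Eq' * (Eq' * t) = t := fun t => by rw [← mul_assoc, hE2, one_mul]
  have hYX' : ∀ t, Yq * (Xq * t) = Xq * (Yq * t) := fun t => by
    rw [← mul_assoc, hYX, mul_assoc]
  have hEX' : ∀ t, Eq' * (Xq * t) = Xq * (Eq' * t) := fun t => by
    rw [← mul_assoc, hEX, mul_assoc]
  have hEY' : ∀ t, Eq' * (Yq * t) = Yq * (Eq' * t) := fun t => by
    rw [← mul_assoc, hEY, mul_assoc]
  cases i <;> cases j <;> cases k <;> cases i' <;> cases j' <;> cases k' <;>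
    simp only [fQ, cond_true, cond_false, Bool.xor_self, Bool.xor_false, Bool.false_xor,
      Bool.true_xor, Bool.not_true, Bool.not_false, one_mul, mul_one, mul_assoc,
      hX2, hY2, hE2, hYX, hEX, hEY, hXX', hYY', hEE', hYX', hEX', hEY']

lemma invfQ (i j k : Bool) : (fQ i j k)⁻¹ = fQ i j k := by
  apply inv_eq_of_mul_eq_one_right
  rw [mulfQ]
  simp [fQ]

def DD : Subgroup SL2 where
  carrier := {g | ∃ i j k : Bool, pr g = fQ i j k}
  one_mem' := ⟨false, false, false, by simp [fQ]⟩
  mul_mem' := by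
    rintro a b ⟨i, j, k, ha⟩ ⟨i', j', k', hb⟩
    exact ⟨_, _, _, by rw [map_mul, ha, hb, mulfQ]⟩
  inv_mem' := by
    rintro a ⟨i, j, k, ha⟩
    exact ⟨i, j, k, by rw [map_inv, ha, invfQ]⟩

lemma Hgen_le_DD : Hgen ≤ DD := by
  rw [Hgen]
  apply (Subgroup.closure_le DD).mpr
  rintro g (rfl | rfl | rfl)
  · exact ⟨true, false, false, by simp [fQ, Xq]⟩
  · exact ⟨false, true, false, by simp [fQ, Yq]⟩
  · exact ⟨false, false, true, by simp [fQ, Eq']⟩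

lemma U4_mem_Gamma4 : U4 ∈ Gamma4 := by
  rw [mem_Gamma4_iff]
  refine ⟨?_, ?_, ?_, ?_⟩ <;> rw [U4_eq] <;> simp

instance Gamma4_normal : Gamma4.Normal := MonoidHom.normal_ker _

lemma NN_le_Gamma4 : NN ≤ Gamma4 :=
  Subgroup.normalClosure_le_normal (by rintro g rfl; exact U4_mem_Gamma4)

lemma Gamma4_le_NN : Gamma4 ≤ NN := by
  intro d hd
  obtain ⟨g1, g2, g3, g4⟩ := mem_Gamma4_iff.mp hd
  have hdH : d ∈ Hgen := by
    apply gen2 ((d 0 0).natAbs + (d 1 0).natAbs) d le_rfl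
    · exact dvd_trans (by norm_num) g2
    · exact dvd_trans (by norm_num) g3
  obtain ⟨i, j, k, hijk⟩ := Hgen_le_DD hdH
  set u : SL2 := (cond i xx 1) * ((cond j yy 1) * (cond k ww 1)) with hu_def
  have hu : pr u = fQ i j k := by
    cases i <;> cases j <;> cases k <;>
      simp [hu_def, fQ, Xq, Yq, Eq', map_mul]
  have h1 : pr (u⁻¹ * d) = 1 := by
    rw [map_mul, map_inv, hu, hijk, inv_mul_cancel]
  have hmN : u⁻¹ * d ∈ NN := pr_eq_one_iff.mp h1
  have huG : u ∈ Gamma4 := by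
    have h2 : u⁻¹ * d ∈ Gamma4 := NN_le_Gamma4 hmN
    have h3 : u = d * (u⁻¹ * d)⁻¹ := by group
    rw [h3]; exact mul_mem hd (inv_mem h2)
  have hd_eq : d = u * (u⁻¹ * d) := by group
  -- now rule out the 7 nontrivial cases
  cases i <;> cases j <;> cases k
  · -- all false : u = 1
    have hu1 : u = 1 := by simp [hu_def]
    rw [hu1, inv_one, one_mul] at hmN
    exact hmN
  all_goals {
    exfalso
    rw [mem_Gamma4_iff] at huG
    obtain ⟨q1, q2, q3, q4⟩ := huG
    simp only [hu_def, cond_false, cond_true, one_mul, mul_one, xx, yy, ww, mkSL_mul,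
      mkSL_apply] at q1 q2 q3 q4
    revert q1 q2 q3 q4; norm_num
    try omega
  }

theorem part1 : Subgroup.normalClosure {U4} = Gamma4 :=
  le_antisymm NN_le_Gamma4 Gamma4_le_NN

-- ### torsion-freeness
def useq (t : ℤ) : ℕ → ℤ
  | 0 => 0
  | 1 => 1
  | (n+2) => t * useq t (n+1) - useq t n

lemma ch (B : SL2) (i j : Fin 2) :
    B i 0 * B 0 j + B i 1 * B 1 j =
      (B 0 0 + B 1 1) * B i j - (1 : Matrix (Fin 2) (Fin 2) ℤ) i j := by
  have hd := detrel B
  fin_cases i <;> fin_cases j <;> simp [Matrix.one_apply] <;> (try ring) <;>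
    (try linear_combination -hd)

lemma pow_entries (B : SL2) : ∀ n : ℕ, ∀ i j,
    (B^(n+1) : SL2) i j = useq (B 0 0 + B 1 1) (n+1) * B i j -
      useq (B 0 0 + B 1 1) n * (1 : Matrix (Fin 2) (Fin 2) ℤ) i j := by
  intro n
  induction n with
  | zero => intro i j; simp [useq]
  | succ n ih =>
      intro i j
      rw [pow_succ, mul_entry, ih i 0, ih i 1,
        show useq (B 0 0 + B 1 1) (n+1+1) =
          (B 0 0 + B 1 1) * useq (B 0 0 + B 1 1) (n+1) - useq (B 0 0 + B 1 1) n from rfl]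
      have hc0 := ch B i 0
      have hc1 := ch B i 1
      have hcj := ch B i j
      fin_cases i <;> fin_cases j <;> simp [Matrix.one_apply] at hcj ⊢ <;>
        linear_combination (useq (B 0 0 + B 1 1) (n+1)) * hcj

lemma useq_growth {t : ℤ} (ht : 2 ≤ |t|) : ∀ n : ℕ, |useq t n| + 1 ≤ |useq t (n+1)| := by
  intro n
  induction n using Nat.strong_induction_on with
  | _ n IH =>
  match n with
  | 0 => simp [useq]
  | (m+1) =>
    have ih := IH m (by omega)
    have h1 : |t * useq t (m+1)| = |t| * |useq t (m+1)| := abs_mul _ _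
    have h2 : |t * useq t (m+1)| - |useq t m| ≤ |t * useq t (m+1) - useq t m| :=
      abs_sub_abs_le_abs_sub _ _
    have h3 : 2 * |useq t (m+1)| ≤ |t| * |useq t (m+1)| :=
      mul_le_mul_of_nonneg_right ht (abs_nonneg _)
    have : useq t (m+2) = t * useq t (m+1) - useq t m := rfl
    rw [this]
    omega

lemma useq_ne_zero {t : ℤ} (ht : 2 ≤ |t|) (n : ℕ) : useq t (n+1) ≠ 0 := by
  have h := useq_growth ht n
  have := abs_nonneg (useq t n)
  intro h0
  rw [h0] at h
  simp at h
  omega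

lemma no_torsion (B : SL2) (hB : B ∈ Gamma4) (n : ℕ) (hn : 0 < n) (h1 : B^n = 1) :
    B = 1 := by
  obtain ⟨g1, g2, g3, g4⟩ := mem_Gamma4_iff.mp hB
  set t := B 0 0 + B 1 1 with ht_def
  have ht : 2 ≤ |t| := by
    have : (4:ℤ) ∣ t - 2 := by
      have : t - 2 = (B 0 0 - 1) + (B 1 1 - 1) := by rw [ht_def]; ring
      rw [this]; exact dvd_add g1 g4
    rcases abs_cases t with ⟨h, _⟩ | ⟨h, _⟩ <;> omega
  obtain ⟨m, rfl⟩ : ∃ m, n = m + 1 := ⟨n - 1, by omega⟩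
  have h00 : (1 : Matrix (Fin 2) (Fin 2) ℤ) 0 0 = 1 := by norm_num [Matrix.one_apply]
  have h01 : (1 : Matrix (Fin 2) (Fin 2) ℤ) 0 1 = 0 := by norm_num [Matrix.one_apply]
  have h10 : (1 : Matrix (Fin 2) (Fin 2) ℤ) 1 0 = 0 := by norm_num [Matrix.one_apply]
  have h11 : (1 : Matrix (Fin 2) (Fin 2) ℤ) 1 1 = 1 := by norm_num [Matrix.one_apply]
  have key : ∀ i j, useq t (m+1) * B i j - useq t m * (1 : Matrix (Fin 2) (Fin 2) ℤ) i j
      = (1 : Matrix (Fin 2) (Fin 2) ℤ) i j := by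
    intro i j
    rw [ht_def, ← pow_entries, h1]
    rfl
  have e01 := key 0 1
  have e10 := key 1 0
  have e00 := key 0 0
  have e11 := key 1 1
  rw [h01] at e01
  rw [h10] at e10
  rw [h00] at e00
  rw [h11] at e11
  have hu := useq_ne_zero ht m
  have hb0 : B 0 1 = 0 := by
    have h2 : useq t (m+1) * B 0 1 = 0 := by linarith
    rcases mul_eq_zero.mp h2 with h | h
    · exact absurd h hu
    · exact h
  have hc0 : B 1 0 = 0 := by
    have h2 : useq t (m+1) * B 1 0 = 0 := by linarith
    rcases mul_eq_zero.mp h2 with h | h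
    · exact absurd h hu
    · exact h
  have hdiag : B 0 0 = B 1 1 := by
    have hsub : useq t (m+1) * (B 0 0 - B 1 1) = 0 := by linear_combination e00 - e11
    rcases mul_eq_zero.mp hsub with h | h
    · exact absurd h hu
    · linarith
  have hdet := detrel B
  rw [hb0, hc0, hdiag] at hdet
  have hB11 : B 1 1 = 1 := by
    have h2 : B 1 1 * B 1 1 = 1 := by linarith
    rcases Int.eq_one_or_neg_one_of_mul_eq_one' h2 with ⟨h, _⟩ | ⟨h, _⟩
    · exact h
    · omega
  rw [one_eq_mkSL]
  exact eq_of_entries B 1 0 0 1 _ (by rw [hdiag, hB11]) hb0 hc0 hB11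

theorem part2 : Monoid.IsTorsionFree ↥Gamma4 := by
  intro g hg hfin
  apply hg
  have hord : 0 < orderOf g := hfin.orderOf_pos
  have hpow : g ^ (orderOf g) = 1 := pow_orderOf_eq_one g
  have hcoe : ((g : SL2))^(orderOf g) = 1 := by
    rw [← SubgroupClass.coe_pow, hpow]
    rfl
  have := no_torsion (g : SL2) g.2 (orderOf g) hord hcoe
  exact Subtype.ext this


/-- The normal closure in `SL(2, ℤ)` of `[[1,4],[0,1]]` equals the principal
congruence subgroup `Γ(4)`, and `Γ(4)` is torsion-free. -/
theorem stmt_19 :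
    Subgroup.normalClosure {U4} = Gamma4 ∧ Monoid.IsTorsionFree Gamma4 :=
  ⟨part1, part2⟩
end
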